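/- If m = ⌊√(2n)⌋ and n ≥ 3, then (m-1)(m-2)/2 < n - 1. Consequently, if n-1 objects are distributed among m columns with at most m-c-1 objects in column c for c ≤ m-1 and 0 objects in column m, we reach a contradiction; hence some column j ≤ m-1 contains at least m-j objects. -/

import Mathlib

lemma gauss_aux2 (M : ℕ) : 2 * ∑ c ∈ Finset.Icc 1 M, (M - c) = M * (M - 1) := by
  induction M with
  | zero => simp
  | succ k ih =>
    have hsplit : Finset.Icc 1 (k+1) = insert (k+1) (Finset.Icc 1 k) := by
      ext x; simp [Finset.mem_Icc]; omega
    rw [hsplit, Finset.sum_insert (by simp [Finset.mem_Icc])]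
    have h1 : ∑ c ∈ Finset.Icc 1 k, (k + 1 - c) = (∑ c ∈ Finset.Icc 1 k, (k - c)) + k := by
      rw [show (∑ c ∈ Finset.Icc 1 k, (k + 1 - c)) = ∑ c ∈ Finset.Icc 1 k, ((k - c) + 1) from
        Finset.sum_congr rfl (fun c hc => by simp [Finset.mem_Icc] at hc; omega),
        Finset.sum_add_distrib]
      simp [Nat.card_Icc]
    simp only [Nat.add_sub_cancel_left, h1]
    cases k with
    | zero => simp
    | succ j =>
      have e : j + 1 - 1 = j := rfl
      rw [e] at ih
      simp only [Nat.add_sub_cancel, Nat.sub_self, zero_add]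
      nlinarith [ih]


/-- Pigeonhole counting step in the one-shot timestamp lower bound:
with `m = ⌊√(2n)⌋` and `n ≥ 3`, we have `(m-1)(m-2)/2 < n-1`; consequently,
if `n-1` objects are distributed among columns `1..m` with column `m` empty,
some column `j ≤ m-1` holds at least `m - j` objects. -/
theorem stmt_0 (n m : ℕ) (hn : 3 ≤ n) (hm : m = Nat.sqrt (2 * n))
    (s : ℕ → ℕ) (hsum : n - 1 ≤ ∑ c ∈ Finset.Icc 1 m, s c) (hsm : s m = 0) :
    (m - 1) * (m - 2) / 2 < n - 1 ∧ ∃ j, 1 ≤ j ∧ j ≤ m - 1 ∧ m - j ≤ s j := by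
  have hm2 : 2 ≤ m := by
    rw [hm]
    exact Nat.le_sqrt.mpr (by omega)
  have hmsq : m * m ≤ 2 * n := by
    rw [hm]; simpa [pow_two] using Nat.sqrt_le' (2 * n)
  obtain ⟨a, rfl⟩ : ∃ a, m = a + 2 := ⟨m - 2, by omega⟩
  obtain ⟨b, rfl⟩ : ∃ b, n = b + 3 := ⟨n - 3, by omega⟩
  have hP : (a + 2 - 1) * (a + 2 - 2) < 2 * (b + 3 - 1) := by
    simp only [Nat.add_sub_cancel, show a + 2 - 1 = a + 1 from rfl, show b + 3 - 1 = b + 2 from rfl]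
    nlinarith
  have key : (a + 2 - 1) * (a + 2 - 2) / 2 < b + 3 - 1 :=
    (Nat.div_lt_iff_lt_mul two_pos).mpr (by linarith [hP])
  refine ⟨key, ?_⟩
  by_contra h
  push_neg at h
  have hbound : ∀ j ∈ Finset.Icc 1 (a + 1), s j ≤ (a + 1) - j := by
    intro j hj
    simp only [Finset.mem_Icc] at hj
    have := h j hj.1 (by omega)
    omega
  have hsum2 : ∑ c ∈ Finset.Icc 1 (a+2), s c ≤ ∑ c ∈ Finset.Icc 1 (a+1), ((a+1) - c) := by
    have hsplit : Finset.Icc 1 (a+2) = insert (a+2) (Finset.Icc 1 (a+1)) := by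
      ext x; simp [Finset.mem_Icc]; omega
    rw [hsplit, Finset.sum_insert (by simp [Finset.mem_Icc]), hsm]
    simpa using Finset.sum_le_sum hbound
  have hgauss := gauss_aux2 (a + 1)
  simp only [Nat.add_sub_cancel] at hgauss
  have keq : (a + 2 - 1) * (a + 2 - 2) = (a + 1) * a := by simp
  rw [keq] at key
  omega
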